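/- Let F = (F_1, …, F_n) be a polynomial vector field on ℝⁿ, let V, B, m_1, …, m_r ∈ ℝ[x_1, …, x_n], and let α > 0. Suppose there exist SOS polynomials s_1, s_2, n_1, …, n_r ∈ ℝ[x_1, …, x_n] such that: −⟨∇V, F⟩ − s_1·B is SOS, ⟨∇B, F⟩ + (α − s_2)·B is SOS, and −n_i·m_i − B is SOS for each i = 1, …, r. Then for every solution x : ℝ → ℝⁿ of ẋ = F(x) with B(x(0)) > 0: (i) B(x(t)) > 0 for all t ≥ 0; (ii) m_i(x(t)) < 0 for all t ≥ 0 and all i, so the trajectory never enters any of the regions {y : m_i(y) ≥ 0}; and (iii) t ↦ V(x(t)) is nonincreasing on [0, ∞). -/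

import Mathlib

open MvPolynomial Set

/-- A real multivariate polynomial is a sum of squares. -/
def IsSOS {N : ℕ} (p : MvPolynomial (Fin N) ℝ) : Prop :=
  ∃ (k : ℕ) (f : Fin k → MvPolynomial (Fin N) ℝ), p = ∑ i, (f i) ^ 2

/-- The Lie derivative ⟨∇W, F⟩ = Σᵢ (∂W/∂xᵢ)·Fᵢ of a polynomial `W` along a
polynomial vector field `F`. -/
noncomputable def lieDeriv {N : ℕ} (W : MvPolynomial (Fin N) ℝ)
    (F : Fin N → MvPolynomial (Fin N) ℝ) : MvPolynomial (Fin N) ℝ :=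
  ∑ i, (pderiv i W) * F i

lemma sos_nonneg {N : ℕ} {p : MvPolynomial (Fin N) ℝ} (h : IsSOS p) (y : Fin N → ℝ) :
    0 ≤ eval y p := by
  obtain ⟨k, f, rfl⟩ := h
  simp only [map_sum, map_pow]
  positivity

lemma hasDerivAt_eval_comp {N : ℕ} (F : Fin N → MvPolynomial (Fin N) ℝ)
    (x : ℝ → Fin N → ℝ) (t : ℝ)
    (hx : ∀ i, HasDerivAt (fun τ => x τ i) (eval (x t) (F i)) t)
    (p : MvPolynomial (Fin N) ℝ) :
    HasDerivAt (fun τ => eval (x τ) p) (eval (x t) (lieDeriv p F)) t := by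
  induction p using MvPolynomial.induction_on with
  | C a =>
      simp only [lieDeriv, pderiv_C, zero_mul, Finset.sum_const_zero, map_zero, eval_C]
      exact hasDerivAt_const t a
  | add p q hp hq =>
      have := hp.add hq
      simp only [eval_add, Pi.add_def] at this ⊢
      refine this.congr_deriv ?_
      simp [lieDeriv, Finset.sum_add_distrib, map_add, add_mul]
  | mul_X p n hp =>
      have := hp.mul (hx n)
      simp only [eval_mul, eval_X, Pi.mul_def] at this ⊢
      refine this.congr_deriv ?_
      simp only [lieDeriv, eval_sum]
      rw [Finset.sum_mul]
      have hsingle : (eval (x t)) p * (eval (x t)) (F n)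
          = ∑ i : Fin N, (eval (x t)) (p * (pderiv i) (X n) * F i) := by
        rw [Finset.sum_eq_single n]
        · simp [pderiv_X_self]
        · intro b _ hb; simp [pderiv_X, Pi.single_apply, hb]
        · simp
      rw [hsingle, ← Finset.sum_add_distrib]
      congr 1; ext i
      simp only [Derivation.leibniz, smul_eq_mul, map_mul, map_add, eval_X, add_mul]
      ring

/-- Theorem 3 (safe stabilization with unsafe regions): under the SOS feasibility
constraints with obstacle multipliers `nᵢ`, every trajectory of `ẋ = F(x)` starting
with `B(x(0)) > 0` keeps `B > 0`, never enters any region `{y | mᵢ(y) ≥ 0}`, and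
`V` is nonincreasing along it. -/
theorem sos_safe_stabilization_with_obstacles {N r : ℕ}
    (F : Fin N → MvPolynomial (Fin N) ℝ)
    (V B : MvPolynomial (Fin N) ℝ) (m : Fin r → MvPolynomial (Fin N) ℝ)
    (α : ℝ) (hα : 0 < α)
    (s₁ s₂ : MvPolynomial (Fin N) ℝ) (nn : Fin r → MvPolynomial (Fin N) ℝ)
    (hs₁ : IsSOS s₁) (hs₂ : IsSOS s₂) (hnn : ∀ i, IsSOS (nn i))
    (h1 : IsSOS (-(lieDeriv V F) - s₁ * B))
    (h2 : IsSOS (lieDeriv B F + (C α - s₂) * B))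
    (h3 : ∀ i, IsSOS (-(nn i * m i) - B))
    (x : ℝ → Fin N → ℝ)
    (hx : ∀ i, ∀ t : ℝ, 0 ≤ t → HasDerivAt (fun τ => x τ i) (eval (x t) (F i)) t)
    (h0 : 0 < eval (x 0) B) :
    (∀ t : ℝ, 0 ≤ t → 0 < eval (x t) B) ∧
    (∀ t : ℝ, 0 ≤ t → ∀ i, eval (x t) (m i) < 0) ∧
    AntitoneOn (fun t => eval (x t) V) (Ici 0) := by

  have key : ∀ (p : MvPolynomial (Fin N) ℝ) (t : ℝ), 0 ≤ t →
      HasDerivAt (fun τ => eval (x τ) p) (eval (x t) (lieDeriv p F)) t :=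
    fun p t ht => hasDerivAt_eval_comp F x t (fun i => hx i t ht) p
  have hBpos : ∀ t : ℝ, 0 ≤ t → 0 < eval (x t) B := by
    by_contra h
    push_neg at h
    obtain ⟨t₁, ht₁, hb1⟩ := h
    set b : ℝ → ℝ := fun τ => eval (x τ) B with hbdef
    have hcont : ContinuousOn b (Ici 0) :=
      fun t ht => ((key B t ht).continuousAt).continuousWithinAt
    set S : Set ℝ := Ici 0 ∩ b ⁻¹' (Iic 0) with hSdef
    have hSne : S.Nonempty := ⟨t₁, ht₁, hb1⟩
    have hSbdd : BddBelow S := ⟨0, fun t ht => ht.1⟩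
    have hSclosed : IsClosed S :=
      hcont.preimage_isClosed_of_isClosed isClosed_Ici isClosed_Iic
    set t₀ := sInf S with ht₀def
    have ht₀S : t₀ ∈ S := hSclosed.csInf_mem hSne hSbdd
    have ht₀0 : 0 ≤ t₀ := ht₀S.1
    have ht₀b : b t₀ ≤ 0 := ht₀S.2
    have hpos : ∀ t ∈ Ico (0:ℝ) t₀, 0 < b t := by
      intro t ht
      by_contra hle
      push_neg at hle
      exact absurd (csInf_le hSbdd ⟨ht.1, hle⟩) (not_le.mpr ht.2)
    have ht₀pos : 0 < t₀ := by
      rcases ht₀0.lt_or_eq with h | h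
      · exact h
      · exfalso
        rw [← h] at ht₀b
        exact absurd h0 (not_lt.mpr ht₀b)
    set g : ℝ → ℝ := fun τ => b τ * Real.exp (α * τ) with hgdef
    have hgd : ∀ t : ℝ, 0 ≤ t → HasDerivAt g
        (eval (x t) (lieDeriv B F) * Real.exp (α * t) + b t * (Real.exp (α * t) * α)) t := by
      intro t ht
      have hlin : HasDerivAt (fun τ : ℝ => α * τ) α t := by
        simpa using (hasDerivAt_id t).const_mul α
      exact (key B t ht).mul hlin.exp
    have hmono : MonotoneOn g (Icc 0 t₀) := by
      apply monotoneOn_of_deriv_nonneg (convex_Icc 0 t₀)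
      · exact (hcont.mono Icc_subset_Ici_self).mul
          ((Real.continuous_exp.comp (continuous_const.mul continuous_id)).continuousOn)
      · rw [interior_Icc]
        intro t ht
        exact (hgd t ht.1.le).differentiableAt.differentiableWithinAt
      · intro t ht
        rw [interior_Icc] at ht
        rw [(hgd t ht.1.le).deriv]
        have h2' := sos_nonneg h2 (x t)
        simp only [map_add, map_mul, map_sub, eval_C] at h2'
        have hbt : 0 < b t := hpos t ⟨ht.1.le, ht.2⟩
        have hs2t := sos_nonneg hs₂ (x t)
        have hexp := Real.exp_pos (α * t)
        have hbB : b t = eval (x t) B := rfl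
        nlinarith [mul_nonneg hs2t hbt.le, mul_pos hexp hbt]
    have hg0 : 0 < g 0 := by
      simp only [hgdef, mul_zero, Real.exp_zero, mul_one]
      exact h0
    have hgle : g 0 ≤ g t₀ := hmono ⟨le_refl 0, ht₀0⟩ ⟨ht₀0, le_refl t₀⟩ ht₀0
    have hgt₀ : g t₀ ≤ 0 := mul_nonpos_of_nonpos_of_nonneg ht₀b (Real.exp_pos _).le
    linarith
  refine ⟨hBpos, ?_, ?_⟩
  · intro t ht i
    have h3' := sos_nonneg (h3 i) (x t)
    simp only [map_sub, map_neg, map_mul] at h3'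
    have hB := hBpos t ht
    have hn := sos_nonneg (hnn i) (x t)
    by_contra hm
    push_neg at hm
    nlinarith
  · apply antitoneOn_of_deriv_nonpos (convex_Ici 0)
    · exact fun t ht => ((key V t ht).continuousAt).continuousWithinAt
    · rw [interior_Ici]
      intro t ht
      exact (key V t (le_of_lt ht)).differentiableAt.differentiableWithinAt
    · intro t ht
      rw [interior_Ici] at ht
      rw [(key V t ht.le).deriv]
      have h1' := sos_nonneg h1 (x t)
      simp only [map_sub, map_neg, map_mul] at h1'
      have hB := hBpos t ht.le
      have hs1 := sos_nonneg hs₁ (x t)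
      nlinarith
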